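/- arXiv:1803.07401 — 4 statements merged into one kernel-verified Lean document; each statement's English description precedes it below -/
import Mathlib

section
/- In the k-nearest-neighbor opinion dynamics, a configuration x ∈ ℝ^n is clustered (i.e., for every agent i, all agents in the neighbor set N_i have opinion equal to x_i) if and only if for every agent i, the set V_i = {j : x_j = x_i} has cardinality at least k. -/
open scoped Classical
open Finset

noncomputable def nearList {n : ℕ} (x : Fin n → ℝ) (i : Fin n) : List (Fin n) :=
  @List.insertionSort (Fin n)
    (fun j j' => |x j - x i| < |x j' - x i| ∨ (|x j - x i| = |x j' - x i| ∧ j ≤ j'))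
    (Classical.decRel _) (List.finRange n)

/-- The set of the `k` agents nearest to `i` in opinion distance (ties broken by lower index). -/
noncomputable def nbr {n : ℕ} (k : ℕ) (x : Fin n → ℝ) (i : Fin n) : Finset (Fin n) :=
  ((nearList x i).take k).toFinset

/-- The asynchronous update `f(x,i)`. -/
noncomputable def upd {n : ℕ} (k : ℕ) (x : Fin n → ℝ) (i : Fin n) : Fin n → ℝ :=
  Function.update x i ((∑ j ∈ nbr k x i, x j) / k)

/-- A configuration is clustered if all neighbors of every agent share its opinion. -/
def Clustered {n : ℕ} (k : ℕ) (x : Fin n → ℝ) : Prop :=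
  ∀ i : Fin n, ∀ j ∈ nbr k x i, x j = x i

/-- `μ(x)`: lowest index attaining the minimum. -/
noncomputable def argminIdx {n : ℕ} [NeZero n] (x : Fin n → ℝ) : Fin n :=
  (Finset.univ.filter fun i => ∀ j, x i ≤ x j).min' (by
    obtain ⟨i, -, hi⟩ := Finset.exists_min_image Finset.univ x Finset.univ_nonempty
    exact ⟨i, Finset.mem_filter.mpr ⟨Finset.mem_univ _, fun j => hi j (Finset.mem_univ j)⟩⟩)

/-- `M(x)`: lowest index attaining the maximum. -/
noncomputable def argmaxIdx {n : ℕ} [NeZero n] (x : Fin n → ℝ) : Fin n :=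
  argminIdx (fun i => -x i)

/-- Trajectory of the dynamics with (possibly state-dependent) update selector `σ`. -/
noncomputable def traj {n : ℕ} (k : ℕ) (σ : ℕ → (Fin n → ℝ) → Fin n) (x0 : Fin n → ℝ) :
    ℕ → Fin n → ℝ
  | 0 => x0
  | t + 1 => upd k (traj k σ x0 t) (σ t (traj k σ x0 t))


/-- `x` is clustered iff every agent's opinion is shared by at least `k` agents. -/
theorem clustered_iff_card {n k : ℕ} (hk : 1 ≤ k) (hkn : k ≤ n) (x : Fin n → ℝ) :
    Clustered k x ↔
      ∀ i : Fin n, k ≤ (Finset.univ.filter fun j => x j = x i).card := by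
  have hperm : ∀ i, (nearList x i).Perm (List.finRange n) :=
    fun i => @List.perm_insertionSort (Fin n) _ (Classical.decRel _) (List.finRange n)
  have hnodup : ∀ i, (nearList x i).Nodup :=
    fun i => ((hperm i).nodup_iff).mpr (List.nodup_finRange n)
  have hlen : ∀ i, (nearList x i).length = n :=
    fun i => (hperm i).length_eq.trans List.length_finRange
  have hmem : ∀ i j, j ∈ nearList x i := fun i j =>
    ((hperm i).mem_iff).mpr (List.mem_finRange j)
  have hcard : ∀ i, (nbr k x i).card = k := by
    intro i
    rw [nbr, List.card_toFinset, List.Nodup.dedup ((hnodup i).sublist (List.take_sublist _ _)),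
      List.length_take, hlen, min_eq_left hkn]
  constructor
  · intro h i
    rw [← hcard i]
    apply Finset.card_le_card
    intro j hj
    simp only [Finset.mem_filter, Finset.mem_univ, true_and]
    exact h i j hj
  · intro h i j hj
    by_contra hne
    set r := fun j j' : Fin n => |x j - x i| < |x j' - x i| ∨ (|x j - x i| = |x j' - x i| ∧ j ≤ j') with hr
    haveI : IsTotal (Fin n) r := ⟨by
      intro a b
      rcases lt_trichotomy (|x a - x i|) (|x b - x i|) with h1|h1|h1
      · exact Or.inl (Or.inl h1)
      · rcases le_total a b with h2|h2
        · exact Or.inl (Or.inr ⟨h1, h2⟩)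
        · exact Or.inr (Or.inr ⟨h1.symm, h2⟩)
      · exact Or.inr (Or.inl h1)⟩
    haveI : IsTrans (Fin n) r := ⟨by
      intro a b c hab hbc
      rcases hab with h1|⟨h1,h1'⟩ <;> rcases hbc with h2|⟨h2,h2'⟩
      · exact Or.inl (h1.trans h2)
      · exact Or.inl (h2 ▸ h1)
      · exact Or.inl (h1 ▸ h2)
      · exact Or.inr ⟨h1.trans h2, h1'.trans h2'⟩⟩
    have hsorted : (nearList x i).Pairwise r := @List.pairwise_insertionSort (Fin n) r (Classical.decRel _) ‹IsTotal _ r› ‹IsTrans _ r› (List.finRange n)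
    have hsub : ¬ ((Finset.univ.filter fun j => x j = x i) ⊆ nbr k x i) := by
      intro hss
      have hVk := h i
      have heq : (Finset.univ.filter fun j => x j = x i) = nbr k x i :=
        Finset.eq_of_subset_of_card_le hss (by rw [hcard i]; omega)
      rw [← heq] at hj
      exact hne (Finset.mem_filter.mp hj).2
    obtain ⟨v, hv, hvn⟩ := Finset.not_subset.mp hsub
    have hvx : x v = x i := (Finset.mem_filter.mp hv).2
    have hvd : v ∈ (nearList x i).drop k := by
      have hm := hmem i v
      rw [← List.take_append_drop k (nearList x i), List.mem_append] at hm
      rcases hm with h'|h'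
      · exact absurd (List.mem_toFinset.mpr h') hvn
      · exact h'
    have hjt : j ∈ (nearList x i).take k := List.mem_toFinset.mp hj
    have hpair : r j v := by
      have hs := hsorted
      rw [← List.take_append_drop k (nearList x i), List.pairwise_append] at hs
      exact hs.2.2 j hjt v hvd
    rcases hpair with h'|⟨h',-⟩
    · rw [hvx, sub_self, abs_zero] at h'
      exact absurd h' (abs_nonneg _).not_gt
    · rw [hvx, sub_self, abs_zero, abs_eq_zero, sub_eq_zero] at h'
      exact hne h'
end

section
/- If at each step the agent with the smallest opinion (ties broken by lowest index) updates, then the neighbor set N_{μ(x(t))} of the updating agent and the value y(t) = max_{i ∈ N_{μ(x(t))}} x_i(t) are constant in t; the opinions of agents in N_{μ(x(0))} are non-decreasing and bounded above by y(0); and the opinions of agents outside N_{μ(x(0))} are constant. -/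
open scoped Classical
open Finset

namespace MinUpd

variable {n : ℕ}

def R (x : Fin n → ℝ) (i : Fin n) (a b : Fin n) : Prop :=
  |x a - x i| < |x b - x i| ∨ (|x a - x i| = |x b - x i| ∧ a ≤ b)

def Sr (x : Fin n → ℝ) (i : Fin n) (a b : Fin n) : Prop :=
  |x a - x i| < |x b - x i| ∨ (|x a - x i| = |x b - x i| ∧ a < b)

lemma sr_asymm {x : Fin n → ℝ} {i a b : Fin n}
    (h1 : Sr x i a b) (h2 : Sr x i b a) : False := by
  rcases h1 with h1 | ⟨h1, h1'⟩ <;> rcases h2 with h2 | ⟨h2, h2'⟩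
  · exact lt_asymm h1 h2
  · rw [h2] at h1; exact lt_irrefl _ h1
  · rw [h1] at h2; exact lt_irrefl _ h2
  · exact lt_asymm h1' h2'

lemma nearList_perm (x : Fin n → ℝ) (i : Fin n) :
    (nearList x i).Perm (List.finRange n) :=
  @List.perm_insertionSort (Fin n) _ (Classical.decRel _) (List.finRange n)

lemma nearList_length (x : Fin n → ℝ) (i : Fin n) : (nearList x i).length = n := by
  rw [(nearList_perm x i).length_eq, List.length_finRange]

lemma nearList_nodup (x : Fin n → ℝ) (i : Fin n) : (nearList x i).Nodup :=
  ((nearList_perm x i).nodup_iff).mpr (List.nodup_finRange n)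

lemma nearList_sorted (x : Fin n → ℝ) (i : Fin n) :
    (nearList x i).Pairwise (R x i) := by
  letI inst : DecidableRel (R x i) := Classical.decRel _
  haveI ht : Std.Total (R x i) := ⟨fun a b => by
    rcases lt_trichotomy (|x a - x i|) (|x b - x i|) with h | h | h
    · exact Or.inl (Or.inl h)
    · rcases le_total a b with hab | hab
      · exact Or.inl (Or.inr ⟨h, hab⟩)
      · exact Or.inr (Or.inr ⟨h.symm, hab⟩)
    · exact Or.inr (Or.inl h)⟩
  haveI htr : IsTrans (Fin n) (R x i) := ⟨fun a b c hab hbc => by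
    rcases hab with h1 | ⟨h1, h1'⟩ <;> rcases hbc with h2 | ⟨h2, h2'⟩
    · exact Or.inl (h1.trans h2)
    · exact Or.inl (h2 ▸ h1)
    · exact Or.inl (h1 ▸ h2)
    · exact Or.inr ⟨h1.trans h2, h1'.trans h2'⟩⟩
  exact List.pairwise_insertionSort (R x i) (List.finRange n)

lemma nbr_card {k : ℕ} (hkn : k ≤ n) (x : Fin n → ℝ) (i : Fin n) :
    (nbr k x i).card = k := by
  have hnd : ((nearList x i).take k).Nodup :=
    (List.take_sublist k _).nodup (nearList_nodup x i)
  rw [nbr, List.toFinset_card_of_nodup hnd, List.length_take, nearList_length,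
    min_eq_left hkn]

lemma nbr_sep {k : ℕ} (x : Fin n → ℝ) (i : Fin n) {a b : Fin n}
    (ha : a ∈ nbr k x i) (hb : b ∉ nbr k x i) : Sr x i a b := by
  have ha' : a ∈ (nearList x i).take k := List.mem_toFinset.mp ha
  have hbl : b ∈ (nearList x i).take k ++ (nearList x i).drop k := by
    rw [List.take_append_drop]
    exact (nearList_perm x i).mem_iff.mpr (List.mem_finRange b)
  have hb' : b ∈ (nearList x i).drop k := by
    rcases List.mem_append.mp hbl with h | h
    · exact absurd (List.mem_toFinset.mpr h) hb
    · exact h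
  have hpw : ((nearList x i).take k ++ (nearList x i).drop k).Pairwise (R x i) := by
    rw [List.take_append_drop]; exact nearList_sorted x i
  have hR : R x i a b := (List.pairwise_append.mp hpw).2.2 a ha' b hb'
  have hne : a ≠ b := by
    have hnd : ((nearList x i).take k ++ (nearList x i).drop k).Nodup := by
      rw [List.take_append_drop]; exact nearList_nodup x i
    rw [List.nodup_append] at hnd
    exact fun h => hnd.2.2 a ha' b hb' h
  rcases hR with h | ⟨h, h'⟩
  · exact Or.inl h
  · exact Or.inr ⟨h, lt_of_le_of_ne h' hne⟩

lemma nbr_eq_of {k : ℕ} (hkn : k ≤ n) (x : Fin n → ℝ) (i : Fin n) {S : Finset (Fin n)}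
    (hcard : S.card = k) (hsep : ∀ a ∈ S, ∀ b ∉ S, Sr x i a b) :
    nbr k x i = S := by
  by_cases hsub : S ⊆ nbr k x i
  · exact (Finset.eq_of_subset_of_card_le hsub (by rw [hcard, nbr_card hkn])).symm
  · exfalso
    obtain ⟨b, hb, hbN⟩ := Finset.not_subset.mp hsub
    have hsub2 : ¬ nbr k x i ⊆ S := by
      intro h
      have := Finset.eq_of_subset_of_card_le h (by rw [nbr_card hkn, hcard])
      exact hbN (this ▸ hb)
    obtain ⟨a, ha, haS⟩ := Finset.not_subset.mp hsub2
    exact sr_asymm (hsep b hb a haS) (nbr_sep x i ha hbN)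

lemma argmin_min [NeZero n] (x : Fin n → ℝ) (j : Fin n) : x (argminIdx x) ≤ x j := by
  have h : argminIdx x ∈ Finset.univ.filter fun i => ∀ j, x i ≤ x j := Finset.min'_mem _ _
  exact (Finset.mem_filter.mp h).2 j

lemma argmin_le [NeZero n] (x : Fin n → ℝ) {i : Fin n} (hi : ∀ j, x i ≤ x j) :
    argminIdx x ≤ i :=
  Finset.min'_le _ _ (Finset.mem_filter.mpr ⟨Finset.mem_univ _, hi⟩)

lemma min_mem_nbr [NeZero n] {k : ℕ} (hk : 1 ≤ k) (hkn : k ≤ n) (x : Fin n → ℝ) :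
    argminIdx x ∈ nbr k x (argminIdx x) := by
  set m := argminIdx x with hm
  by_contra hmN
  have hne : (nbr k x m).Nonempty := Finset.card_pos.mp (by rw [nbr_card hkn]; omega)
  obtain ⟨a, ha⟩ := hne
  have h1 : Sr x m a m := nbr_sep x m ha hmN
  have h2 : Sr x m m a := by
    have h0 : |x m - x m| = 0 := by simp
    rcases eq_or_lt_of_le (abs_nonneg (x a - x m)) with hd | hd
    · right
      refine ⟨by rw [h0, ← hd], ?_⟩
      have hxa : x a = x m := by
        have := abs_eq_zero.mp hd.symm; linarith
      have hma : m ≤ a := argmin_le x (fun j => by rw [hxa]; exact argmin_min x j)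
      exact lt_of_le_of_ne hma (fun h => hmN (h ▸ ha))
    · left; rw [h0]; exact hd
  exact sr_asymm h2 h1

lemma step [NeZero n] {k : ℕ} (hk : 1 ≤ k) (hkn : k ≤ n) (x : Fin n → ℝ) (Y : ℝ)
    (hwit : ∃ j ∈ nbr k x (argminIdx x), x j = Y)
    (hub : ∀ a ∈ nbr k x (argminIdx x), x a ≤ Y) :
    (nbr k (upd k x (argminIdx x)) (argminIdx (upd k x (argminIdx x))) =
      nbr k x (argminIdx x)) ∧
    (∀ j, x j ≤ upd k x (argminIdx x) j) ∧
    (∃ j ∈ nbr k x (argminIdx x), upd k x (argminIdx x) j = Y) ∧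
    (∀ a ∈ nbr k x (argminIdx x), upd k x (argminIdx x) a ≤ Y) ∧
    (∀ j, j ∉ nbr k x (argminIdx x) → upd k x (argminIdx x) j = x j) := by
  set m := argminIdx x with hmdef
  set N := nbr k x m with hNdef
  set x' := upd k x m with hx'def
  have hmem : m ∈ N := min_mem_nbr hk hkn x
  have hcard : N.card = k := nbr_card hkn x m
  have hkpos : (0:ℝ) < (k:ℝ) := by exact_mod_cast hk
  have hmin : ∀ j, x m ≤ x j := argmin_min x
  have hx'm : x' m = (∑ j ∈ N, x j) / k := Function.update_self _ _ _
  have hx'ne : ∀ j, j ≠ m → x' j = x j := fun j hj => Function.update_of_ne hj _ _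
  have hout : ∀ b ∉ N, Y ≤ x b := by
    intro b hb
    obtain ⟨j, hj, hjY⟩ := hwit
    rcases nbr_sep x m hj hb with h | ⟨h, -⟩ <;>
      rw [abs_of_nonneg (sub_nonneg.mpr (hmin j)), abs_of_nonneg (sub_nonneg.mpr (hmin b))] at h <;>
      linarith
  have hsum_le : ∑ j ∈ N, x j ≤ (k:ℝ) * Y := by
    have := Finset.sum_le_card_nsmul N x Y hub
    rwa [hcard, nsmul_eq_mul] at this
  have hsum_ge : (k:ℝ) * x m ≤ ∑ j ∈ N, x j := by
    have := Finset.card_nsmul_le_sum N x (x m) (fun a _ => hmin a)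
    rwa [hcard, nsmul_eq_mul] at this
  have hm_le : x m ≤ x' m := by
    rw [hx'm, le_div_iff₀ hkpos]; linarith
  have hm_ub : x' m ≤ Y := by
    rw [hx'm, div_le_iff₀ hkpos]; linarith
  have h_all_le : ∀ a ∈ N, x' a ≤ Y := by
    intro a ha
    by_cases h : a = m
    · rw [h]; exact hm_ub
    · rw [hx'ne a h]; exact hub a ha
  have hmono : ∀ j, x j ≤ x' j := by
    intro j
    by_cases h : j = m
    · rw [h]; exact hm_le
    · rw [hx'ne j h]
  have hdeg : x' m = Y → ∀ a ∈ N, x a = Y := by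
    intro hEq a ha
    by_contra hne'
    have hlt : x a < Y := lt_of_le_of_ne (hub a ha) hne'
    have hslt : ∑ j ∈ N, x j < ∑ _j ∈ N, Y :=
      Finset.sum_lt_sum hub ⟨a, ha, hlt⟩
    rw [Finset.sum_const, hcard, nsmul_eq_mul] at hslt
    have hsumY : ∑ j ∈ N, x j = (k:ℝ) * Y := by
      have := hx'm.symm.trans hEq
      field_simp at this
      linarith [this]
    linarith
  have hwit' : ∃ j ∈ N, x' j = Y := by
    obtain ⟨j, hj, hjY⟩ := hwit
    by_cases h : j = m
    · refine ⟨m, hmem, ?_⟩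
      have hall : ∀ a ∈ N, x a = Y := by
        intro a ha
        refine le_antisymm (hub a ha) ?_
        rw [← hjY, h]; exact hmin a
      rw [hx'm, Finset.sum_congr rfl hall, Finset.sum_const, hcard, nsmul_eq_mul]
      field_simp
    · exact ⟨j, hj, by rw [hx'ne j h]; exact hjY⟩
  refine ⟨?_, hmono, hwit', h_all_le, fun j hj => hx'ne j (fun h => hj (h ▸ hmem))⟩
  refine nbr_eq_of hkn x' (argminIdx x') hcard ?_
  intro a ha b hb
  set m' := argminIdx x' with hm'def
  have hmin' : ∀ j, x' m' ≤ x' j := argmin_min x'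
  have hbM : b ≠ m := fun h => hb (h ▸ hmem)
  have hx'b : x' b = x b := hx'ne b hbM
  have h1 : x' a ≤ Y := h_all_le a ha
  have h2 : Y ≤ x' b := by rw [hx'b]; exact hout b hb
  rcases eq_or_lt_of_le (h1.trans h2) with heq | hlt
  · right
    refine ⟨by rw [heq], ?_⟩
    have hay : x' a = Y := le_antisymm h1 (by rw [heq]; exact h2)
    by_cases ham : a = m
    · have hallY : ∀ c ∈ N, x c = Y := hdeg (by rw [← ham]; exact hay)
      have hxm : x m = Y := hallY m hmem
      have hxb : x b = Y := by rw [← hx'b, ← heq, hay]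
      have hmb : m ≤ b := argmin_le x (fun j => by rw [hxb, ← hxm]; exact hmin j)
      rw [ham]
      exact lt_of_le_of_ne hmb (Ne.symm hbM)
    · have hxa : x a = Y := by rw [← hx'ne a ham]; exact hay
      have hxb : x b = Y := by rw [← hx'b, ← heq, hay]
      rcases nbr_sep x m ha hb with h | ⟨-, h⟩
      · exfalso
        rw [abs_of_nonneg (sub_nonneg.mpr (hmin a)), abs_of_nonneg (sub_nonneg.mpr (hmin b)),
          hxa, hxb] at h
        exact lt_irrefl _ h
      · exact h
  · left
    rw [abs_of_nonneg (sub_nonneg.mpr (hmin' a)), abs_of_nonneg (sub_nonneg.mpr (hmin' b))]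
    linarith

end MinUpd

/-- when the minimum-opinion agent always updates, the neighbor set of the
updating agent and `y(t)` are constant, opinions inside the neighbor set are non-decreasing
and bounded by `y(0)`, and other opinions are constant. -/
theorem min_update_invariants {n k : ℕ} [NeZero n] (hk : 1 ≤ k) (hkn : k ≤ n)
    (x0 : Fin n → ℝ) (X : ℕ → Fin n → ℝ)
    (hX : X = traj k (fun _ x => argminIdx x) x0)
    (y : ℕ → ℝ)
    (hy : ∀ t, y t = sSup (X t '' (nbr k (X t) (argminIdx (X t)) : Set (Fin n)))) :
    (∀ t, nbr k (X t) (argminIdx (X t)) = nbr k x0 (argminIdx x0)) ∧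
    (∀ t, y t = y 0) ∧
    (∀ i ∈ nbr k x0 (argminIdx x0), Monotone (fun t => X t i) ∧ ∀ t, X t i ≤ y 0) ∧
    (∀ i ∉ nbr k x0 (argminIdx x0), ∀ t, X t i = x0 i) := by
  have e0 : X 0 = x0 := by rw [hX]; rfl
  have estep : ∀ t, X (t + 1) = upd k (X t) (argminIdx (X t)) := by
    intro t; rw [hX]; rfl
  set m0 := argminIdx x0 with hm0
  set N0 := nbr k x0 m0 with hN0
  have hN0card : N0.card = k := MinUpd.nbr_card hkn x0 m0
  have hN0ne : N0.Nonempty := Finset.card_pos.mp (by rw [hN0card]; omega)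
  have himne : (N0.image x0).Nonempty := hN0ne.image x0
  set Y := (N0.image x0).max' himne with hYdef
  have hwit0 : ∃ j ∈ N0, x0 j = Y := by
    have h := (N0.image x0).max'_mem himne
    rw [Finset.mem_image] at h
    exact h
  have hub0 : ∀ a ∈ N0, x0 a ≤ Y := fun a ha =>
    Finset.le_max' _ _ (Finset.mem_image_of_mem x0 ha)
  have key : ∀ t, nbr k (X t) (argminIdx (X t)) = N0 ∧ (∃ j ∈ N0, X t j = Y) ∧
      (∀ a ∈ N0, X t a ≤ Y) ∧ (∀ i ∉ N0, X t i = x0 i) := by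
    intro t
    induction t with
    | zero =>
      exact ⟨by rw [e0], by rw [e0]; exact hwit0, by rw [e0]; exact hub0,
        fun i _ => by rw [e0]⟩
    | succ t ih =>
      obtain ⟨h1, h2, h3, h4⟩ := ih
      have hw : ∃ j ∈ nbr k (X t) (argminIdx (X t)), X t j = Y := by rw [h1]; exact h2
      have hu : ∀ a ∈ nbr k (X t) (argminIdx (X t)), X t a ≤ Y := by rw [h1]; exact h3
      have hs := MinUpd.step hk hkn (X t) Y hw hu
      refine ⟨?_, ?_, ?_, ?_⟩
      · rw [estep t, hs.1]; exact h1
      · obtain ⟨j, hj, hjY⟩ := hs.2.2.1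
        exact ⟨j, h1 ▸ hj, by rw [estep t]; exact hjY⟩
      · intro a ha
        rw [estep t]
        exact hs.2.2.2.1 a (by rw [h1]; exact ha)
      · intro i hi
        rw [estep t, hs.2.2.2.2 i (by rw [h1]; exact hi)]
        exact h4 i hi
  have hyY : ∀ t, y t = Y := by
    intro t
    rw [hy t, (key t).1]
    refine IsGreatest.csSup_eq ⟨?_, ?_⟩
    · obtain ⟨j, hj, hjY⟩ := (key t).2.1
      exact ⟨j, Finset.mem_coe.mpr hj, hjY⟩
    · rintro z ⟨a, ha, rfl⟩
      exact (key t).2.2.1 a (Finset.mem_coe.mp ha)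
  have hmono : ∀ t j, X t j ≤ X (t + 1) j := by
    intro t j
    obtain ⟨h1, h2, h3, -⟩ := key t
    have hw : ∃ j ∈ nbr k (X t) (argminIdx (X t)), X t j = Y := by rw [h1]; exact h2
    have hu : ∀ a ∈ nbr k (X t) (argminIdx (X t)), X t a ≤ Y := by rw [h1]; exact h3
    rw [estep t]
    exact (MinUpd.step hk hkn (X t) Y hw hu).2.1 j
  refine ⟨fun t => (key t).1, fun t => by rw [hyY t, hyY 0], ?_,
    fun i hi t => (key t).2.2.2 i hi⟩
  intro i hi
  refine ⟨monotone_nat_of_le_succ (fun t => hmono t i), fun t => ?_⟩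
  rw [hyY 0]
  exact (key t).2.2.1 i hi
end

section
/- If for k−1 consecutive steps the agent with smallest opinion updates, then the gap between y and the minimum contracts: y(k−1) − min_i x_i(k−1) ≤ (1 − 1/k)·(y(0) − min_i x_i(0)), where y(t) = max_{i ∈ N_{μ(x(t))}} x_i(t). -/
open scoped Classical
open Finset

/- ---------- auxiliary lemmas ---------- -/

lemma argmin_le' {n : ℕ} [NeZero n] (x : Fin n → ℝ) (j : Fin n) : x (argminIdx x) ≤ x j := by
  have h : argminIdx x ∈ Finset.univ.filter fun i => ∀ j, x i ≤ x j := Finset.min'_mem _ _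
  exact (Finset.mem_filter.mp h).2 j

lemma nearList_perm' {n : ℕ} (x : Fin n → ℝ) (i : Fin n) :
    (nearList x i).Perm (List.finRange n) := by
  exact @List.perm_insertionSort (Fin n)
    (fun j j' => |x j - x i| < |x j' - x i| ∨ (|x j - x i| = |x j' - x i| ∧ j ≤ j'))
    (Classical.decRel _) (List.finRange n)

lemma nearList_sorted' {n : ℕ} (x : Fin n → ℝ) (i : Fin n) :
    (nearList x i).Pairwise
      (fun j j' => |x j - x i| < |x j' - x i| ∨ (|x j - x i| = |x j' - x i| ∧ j ≤ j')) := by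
  set r : Fin n → Fin n → Prop :=
    fun j j' => |x j - x i| < |x j' - x i| ∨ (|x j - x i| = |x j' - x i| ∧ j ≤ j') with hr
  haveI : IsTotal (Fin n) r := by
    constructor
    intro a b
    rcases lt_trichotomy (|x a - x i|) (|x b - x i|) with h | h | h
    · exact Or.inl (Or.inl h)
    · rcases le_total a b with hab | hab
      · exact Or.inl (Or.inr ⟨h, hab⟩)
      · exact Or.inr (Or.inr ⟨h.symm, hab⟩)
    · exact Or.inr (Or.inl h)
  haveI : IsTrans (Fin n) r := by
    constructor
    rintro a b c (h1 | ⟨h1, h1'⟩) (h2 | ⟨h2, h2'⟩)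
    · exact Or.inl (h1.trans h2)
    · exact Or.inl (h2 ▸ h1)
    · exact Or.inl (h1 ▸ h2)
    · exact Or.inr ⟨h1.trans h2, h1'.trans h2'⟩
  exact @List.pairwise_insertionSort (Fin n) r (Classical.decRel _) _ _ (List.finRange n)

lemma card_nbr' {n k : ℕ} (hkn : k ≤ n) (x : Fin n → ℝ) (i : Fin n) :
    (nbr k x i).card = k := by
  have hperm := nearList_perm' x i
  have hnd : (nearList x i).Nodup := hperm.nodup_iff.mpr (List.nodup_finRange n)
  have hnd' : ((nearList x i).take k).Nodup := (List.take_sublist k _).nodup hnd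
  rw [nbr, List.toFinset_card_of_nodup hnd', List.length_take, hperm.length_eq,
    List.length_finRange, min_eq_left hkn]

lemma nbr_le' {n k : ℕ} [NeZero n] (x : Fin n → ℝ) {j j' : Fin n}
    (hj : j ∈ nbr k x (argminIdx x)) (hj' : j' ∉ nbr k x (argminIdx x)) : x j ≤ x j' := by
  set i := argminIdx x with hi
  have hs := nearList_sorted' x i
  have hjt : j ∈ (nearList x i).take k := List.mem_toFinset.mp hj
  have hj'mem : j' ∈ nearList x i := (nearList_perm' x i).mem_iff.mpr (List.mem_finRange j')
  have hj'd : j' ∈ (nearList x i).drop k := by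
    rcases List.mem_append.mp ((List.take_append_drop k (nearList x i)).symm ▸ hj'mem) with h | h
    · exact absurd (List.mem_toFinset.mpr h) hj'
    · exact h
  have hrel := hs.rel_of_mem_take_of_mem_drop hjt hj'd
  have h1 : |x j - x i| = x j - x i := abs_of_nonneg (sub_nonneg.mpr (argmin_le' x j))
  have h2 : |x j' - x i| = x j' - x i := abs_of_nonneg (sub_nonneg.mpr (argmin_le' x j'))
  rcases hrel with h | ⟨h, -⟩ <;> rw [h1, h2] at h <;> linarith

/- ---------- main theorem ---------- -/

/-- after `k-1` updates by the minimum-opinion agent, the gap `y - min`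
contracts by a factor `1 - 1/k`. -/
theorem min_update_contraction {n k : ℕ} [NeZero n] (hk : 1 ≤ k) (hkn : k ≤ n)
    (x0 : Fin n → ℝ) (X : ℕ → Fin n → ℝ)
    (hX : X = traj k (fun _ x => argminIdx x) x0)
    (y : ℕ → ℝ)
    (hy : ∀ t, y t = sSup (X t '' (nbr k (X t) (argminIdx (X t)) : Set (Fin n)))) :
    y (k - 1) - sInf (Set.range (X (k - 1))) ≤
      (1 - 1 / (k : ℝ)) * (y 0 - sInf (Set.range x0)) := by
  have hk0 : (0:ℝ) < k := by exact_mod_cast hk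
  haveI : Nonempty (Fin n) := ⟨⟨0, Nat.pos_of_ne_zero (NeZero.ne n)⟩⟩
  set m0 : ℝ := sInf (Set.range x0) with hm0
  have hX0 : X 0 = x0 := by rw [hX]; rfl
  have hstep : ∀ t, X (t+1) = Function.update (X t) (argminIdx (X t))
      ((∑ j ∈ nbr k (X t) (argminIdx (X t)), X t j) / k) := by
    intro t; rw [hX]; rfl
  have hNcard : ∀ t, (nbr k (X t) (argminIdx (X t))).card = k := fun t => card_nbr' hkn _ _
  have hNne : ∀ t, (nbr k (X t) (argminIdx (X t))).Nonempty := fun t =>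
    Finset.card_pos.mp (by rw [hNcard]; exact hk)
  have hSfin : ∀ t, (X t '' ((nbr k (X t) (argminIdx (X t)) : Finset (Fin n)) : Set (Fin n))).Finite :=
    fun t => ((nbr k (X t) (argminIdx (X t))).finite_toSet).image _
  have hSne : ∀ t, (X t '' ((nbr k (X t) (argminIdx (X t)) : Finset (Fin n)) : Set (Fin n))).Nonempty :=
    fun t => Set.Nonempty.image _ (by exact_mod_cast (hNne t).to_set)
  have hy_ub : ∀ t, ∀ j ∈ nbr k (X t) (argminIdx (X t)), X t j ≤ y t := by
    intro t j hj
    rw [hy t]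
    exact le_csSup (hSfin t).bddAbove ⟨j, hj, rfl⟩
  have hy_mem : ∀ t, ∃ j ∈ nbr k (X t) (argminIdx (X t)), X t j = y t := by
    intro t
    have h := Set.Nonempty.csSup_mem (hSne t) (hSfin t)
    rw [← hy t] at h
    obtain ⟨j, hj, hjy⟩ := h
    exact ⟨j, hj, hjy⟩
  have hm0_le : ∀ i, m0 ≤ X 0 i := by
    intro i; rw [hX0]; exact csInf_le (Set.finite_range x0).bddBelow ⟨i, rfl⟩
  have hy0_ge : m0 ≤ y 0 := by
    obtain ⟨j, hj, hjy⟩ := hy_mem 0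
    rw [← hjy]; exact hm0_le j
  set c : ℝ := m0 + (y 0 - m0) / k with hc
  have hcy0 : c ≤ y 0 := by
    have h1 : (y 0 - m0) / k ≤ y 0 - m0 :=
      div_le_self (by linarith) (by exact_mod_cast hk)
    rw [hc]; linarith
  -- derived facts
  have hNle : ∀ t, k ≤ (univ.filter fun i => X t i ≤ y 0).card →
      ∀ j ∈ nbr k (X t) (argminIdx (X t)), X t j ≤ y 0 := by
    intro t hcard j hj
    by_contra hgt
    push_neg at hgt
    have hsub : (univ.filter fun i => X t i ≤ y 0) ⊆ (nbr k (X t) (argminIdx (X t))).erase j := by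
      intro i hi
      rw [Finset.mem_filter] at hi
      have hiN : i ∈ nbr k (X t) (argminIdx (X t)) := by
        by_contra hiN
        have := nbr_le' (X t) hj hiN
        linarith [hi.2]
      refine Finset.mem_erase.mpr ⟨?_, hiN⟩
      rintro rfl
      linarith [hi.2]
    have hle := Finset.card_le_card hsub
    rw [Finset.card_erase_of_mem hj, hNcard] at hle
    omega
  have hNex : ∀ t, (univ.filter fun i => X t i < y 0).card ≤ k - 1 →
      ∃ j0 ∈ nbr k (X t) (argminIdx (X t)), y 0 ≤ X t j0 := by
    intro t hb
    by_contra h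
    push_neg at h
    have hsub : nbr k (X t) (argminIdx (X t)) ⊆ univ.filter fun i => X t i < y 0 :=
      fun j hj => Finset.mem_filter.mpr ⟨Finset.mem_univ _, h j hj⟩
    have hle := Finset.card_le_card hsub
    rw [hNcard] at hle
    omega
  have havg_ge : ∀ t (b : ℝ), (∀ j ∈ nbr k (X t) (argminIdx (X t)), b ≤ X t j) →
      b ≤ (∑ j ∈ nbr k (X t) (argminIdx (X t)), X t j) / k := by
    intro t b hb
    rw [le_div_iff₀ hk0]
    have h := Finset.card_nsmul_le_sum (nbr k (X t) (argminIdx (X t))) (X t) b hb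
    rw [hNcard, nsmul_eq_mul] at h
    linarith
  have havg_le : ∀ t (b : ℝ), (∀ j ∈ nbr k (X t) (argminIdx (X t)), X t j ≤ b) →
      (∑ j ∈ nbr k (X t) (argminIdx (X t)), X t j) / k ≤ b := by
    intro t b hb
    rw [div_le_iff₀ hk0]
    have h := Finset.sum_le_card_nsmul (nbr k (X t) (argminIdx (X t))) (X t) b hb
    rw [hNcard, nsmul_eq_mul] at h
    linarith
  have havg_c : ∀ t, (∀ i, m0 ≤ X t i) → (∃ j0 ∈ nbr k (X t) (argminIdx (X t)), y 0 ≤ X t j0) →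
      c ≤ (∑ j ∈ nbr k (X t) (argminIdx (X t)), X t j) / k := by
    rintro t ha ⟨j0, hj0, hj0y⟩
    have hsum : y 0 + ((k:ℝ) - 1) * m0 ≤ ∑ j ∈ nbr k (X t) (argminIdx (X t)), X t j := by
      rw [← Finset.add_sum_erase _ _ hj0]
      have h2 := Finset.card_nsmul_le_sum ((nbr k (X t) (argminIdx (X t))).erase j0) (X t) m0
        (fun j _ => ha j)
      rw [Finset.card_erase_of_mem hj0, hNcard, nsmul_eq_mul, Nat.cast_sub hk] at h2
      push_cast at h2
      linarith
    rw [le_div_iff₀ hk0]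
    have hmul : c * k = y 0 + ((k:ℝ) - 1) * m0 := by
      rw [hc]; field_simp; ring
    linarith
  -- the invariant
  have hInv : ∀ t, (∀ i, m0 ≤ X t i) ∧
      (univ.filter fun i => X t i < y 0).card ≤ k - 1 ∧
      k ≤ (univ.filter fun i => X t i ≤ y 0).card ∧
      ((univ.filter fun i => X t i < c).card + t ≤ k - 1 ∨ ∀ i, c ≤ X t i) := by
    intro t
    induction t with
    | zero =>
      refine ⟨hm0_le, ?_, ?_, ?_⟩
      · obtain ⟨js, hjs, hjsy⟩ := hy_mem 0
        have hsub : (univ.filter fun i => X 0 i < y 0) ⊆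
            (nbr k (X 0) (argminIdx (X 0))).erase js := by
          intro i hi
          rw [Finset.mem_filter] at hi
          have hiN : i ∈ nbr k (X 0) (argminIdx (X 0)) := by
            by_contra hiN
            have := nbr_le' (X 0) hjs hiN
            linarith [hi.2]
          refine Finset.mem_erase.mpr ⟨?_, hiN⟩
          rintro rfl
          rw [hjsy] at hi
          exact lt_irrefl _ hi.2
        have hle := Finset.card_le_card hsub
        rwa [Finset.card_erase_of_mem hjs, hNcard] at hle
      · have hsub : nbr k (X 0) (argminIdx (X 0)) ⊆ univ.filter fun i => X 0 i ≤ y 0 :=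
          fun j hj => Finset.mem_filter.mpr ⟨Finset.mem_univ _, hy_ub 0 j hj⟩
        have hle := Finset.card_le_card hsub
        rwa [hNcard] at hle
      · left
        have hsub : (univ.filter fun i => X 0 i < c) ⊆ univ.filter fun i => X 0 i < y 0 := by
          intro i hi
          rw [Finset.mem_filter] at hi ⊢
          exact ⟨hi.1, lt_of_lt_of_le hi.2 hcy0⟩
        have hle := Finset.card_le_card hsub
        obtain ⟨js, hjs, hjsy⟩ := hy_mem 0
        have hsub2 : (univ.filter fun i => X 0 i < y 0) ⊆
            (nbr k (X 0) (argminIdx (X 0))).erase js := by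
          intro i hi
          rw [Finset.mem_filter] at hi
          have hiN : i ∈ nbr k (X 0) (argminIdx (X 0)) := by
            by_contra hiN
            have := nbr_le' (X 0) hjs hiN
            linarith [hi.2]
          refine Finset.mem_erase.mpr ⟨?_, hiN⟩
          rintro rfl
          rw [hjsy] at hi
          exact lt_irrefl _ hi.2
        have hle2 := Finset.card_le_card hsub2
        rw [Finset.card_erase_of_mem hjs, hNcard] at hle2
        omega
    | succ t ih =>
      obtain ⟨ha, hb, hd, hcOr⟩ := ih
      have hF2 : ∀ j ∈ nbr k (X t) (argminIdx (X t)), X t j ≤ y 0 := hNle t hd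
      have hF1 : ∃ j0 ∈ nbr k (X t) (argminIdx (X t)), y 0 ≤ X t j0 := hNex t hb
      have ha_m0 : m0 ≤ (∑ j ∈ nbr k (X t) (argminIdx (X t)), X t j) / k :=
        havg_ge t m0 (fun j _ => ha j)
      have ha_y0 : (∑ j ∈ nbr k (X t) (argminIdx (X t)), X t j) / k ≤ y 0 :=
        havg_le t (y 0) hF2
      have ha_c : c ≤ (∑ j ∈ nbr k (X t) (argminIdx (X t)), X t j) / k := havg_c t ha hF1
      have happ : ∀ i, X (t+1) i = if i = argminIdx (X t)
          then (∑ j ∈ nbr k (X t) (argminIdx (X t)), X t j) / k else X t i := by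
        intro i; rw [hstep t, Function.update_apply]
      refine ⟨?_, ?_, ?_, ?_⟩
      · intro i
        rw [happ i]
        split_ifs
        · exact ha_m0
        · exact ha i
      · have hsub : (univ.filter fun i => X (t+1) i < y 0) ⊆
            univ.filter fun i => X t i < y 0 := by
          intro i hi
          rw [Finset.mem_filter] at hi ⊢
          refine ⟨Finset.mem_univ _, ?_⟩
          rcases eq_or_ne i (argminIdx (X t)) with rfl | hne
          · by_contra hge
            push_neg at hge
            have hge2 : y 0 ≤ (∑ j ∈ nbr k (X t) (argminIdx (X t)), X t j) / k :=
              havg_ge t (y 0) (fun j _ => hge.trans (argmin_le' (X t) j))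
            rw [happ, if_pos rfl] at hi
            linarith [hi.2]
          · have := hi.2
            rwa [happ i, if_neg hne] at this
        have := Finset.card_le_card hsub
        omega
      · have hsub : (univ.filter fun i => X t i ≤ y 0) ⊆
            univ.filter fun i => X (t+1) i ≤ y 0 := by
          intro i hi
          rw [Finset.mem_filter] at hi ⊢
          refine ⟨Finset.mem_univ _, ?_⟩
          rw [happ i]
          split_ifs
          · exact ha_y0
          · exact hi.2
        have := Finset.card_le_card hsub
        omega
      · by_cases hall : ∀ i, c ≤ X t i
        · right
          intro i
          rw [happ i]
          split_ifs
          · exact ha_c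
          · exact hall i
        · rcases hcOr with hleft | hright
          · left
            push_neg at hall
            obtain ⟨i0, hi0⟩ := hall
            have hμ : X t (argminIdx (X t)) < c := lt_of_le_of_lt (argmin_le' (X t) i0) hi0
            have hμmem : argminIdx (X t) ∈ univ.filter fun i => X t i < c :=
              Finset.mem_filter.mpr ⟨Finset.mem_univ _, hμ⟩
            have hsub : (univ.filter fun i => X (t+1) i < c) ⊆
                (univ.filter fun i => X t i < c).erase (argminIdx (X t)) := by
              intro i hi
              rw [Finset.mem_filter] at hi
              have hne : i ≠ argminIdx (X t) := by
                rintro rfl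
                rw [happ, if_pos rfl] at hi
                linarith [hi.2]
              refine Finset.mem_erase.mpr ⟨hne, Finset.mem_filter.mpr ⟨Finset.mem_univ _, ?_⟩⟩
              have := hi.2
              rwa [happ i, if_neg hne] at this
            have h1 := Finset.card_le_card hsub
            rw [Finset.card_erase_of_mem hμmem] at h1
            have h2 : 1 ≤ (univ.filter fun i => X t i < c).card :=
              Finset.card_pos.mpr ⟨argminIdx (X t), hμmem⟩
            omega
          · exact absurd hright hall
  -- conclusion
  obtain ⟨haT, hbT, hdT, hcT⟩ := hInv (k - 1)
  have hallc : ∀ i, c ≤ X (k-1) i := by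
    rcases hcT with hl | hr
    · intro i
      by_contra h
      push_neg at h
      have hmem : i ∈ univ.filter fun i => X (k-1) i < c :=
        Finset.mem_filter.mpr ⟨Finset.mem_univ _, h⟩
      have hpos := Finset.card_pos.mpr ⟨i, hmem⟩
      omega
    · exact hr
  have hinf : c ≤ sInf (Set.range (X (k-1))) := by
    apply le_csInf (Set.range_nonempty _)
    rintro b ⟨i, rfl⟩
    exact hallc i
  have hyT : y (k-1) ≤ y 0 := by
    rw [hy (k-1)]
    apply csSup_le (hSne (k-1))
    rintro b ⟨j, hj, rfl⟩
    exact hNle (k-1) hdT j hj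
  have hfinal : (1 - 1/(k:ℝ)) * (y 0 - m0) = y 0 - c := by
    rw [hc]; field_simp; ring
  rw [hfinal]
  exact sub_le_sub hyT hinf
end

section
/- Adding one agent to a clustered equilibrium does not perturb the original agents: if x ∈ ℝ^n is clustered for parameter k (every opinion value shared by at least k agents) and x' = [x; α] ∈ ℝ^{n+1} for any α ∈ ℝ, then for every original agent i ∈ {1,…,n}, the update f(x', i) in the (n+1)-agent dynamics leaves all coordinates of x' unchanged except possibly none, i.e., f(x', i) = x' for all i ≤ n. -/
open scoped Classical
open Finset

/-- appending one agent to a clustered equilibrium (every opinion value shared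
by at least `k` agents) does not perturb the original agents. -/
theorem add_agent_robust {n k : ℕ} (hk : 1 ≤ k) (hkn : k ≤ n) (x : Fin n → ℝ)
    (hx : ∀ i : Fin n, k ≤ (Finset.univ.filter fun j => x j = x i).card) (α : ℝ) :
    ∀ i : Fin n, upd k (Fin.snoc x α) (Fin.castSucc i) = Fin.snoc x α := by
  intro i
  set x' : Fin (n+1) → ℝ := Fin.snoc x α with hx'
  set i' : Fin (n+1) := Fin.castSucc i with hi'
  set r : Fin (n+1) → Fin (n+1) → Prop :=
    fun j j' => |x' j - x' i'| < |x' j' - x' i'| ∨ (|x' j - x' i'| = |x' j' - x' i'| ∧ j ≤ j')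
    with hr
  haveI : IsTotal (Fin (n+1)) r := by
    constructor
    intro a b
    rcases lt_trichotomy (|x' a - x' i'|) (|x' b - x' i'|) with h | h | h
    · exact Or.inl (Or.inl h)
    · rcases le_total a b with hab | hab
      · exact Or.inl (Or.inr ⟨h, hab⟩)
      · exact Or.inr (Or.inr ⟨h.symm, hab⟩)
    · exact Or.inr (Or.inl h)
  haveI : IsTrans (Fin (n+1)) r := by
    constructor
    rintro a b c (h1 | ⟨h1, h1'⟩) (h2 | ⟨h2, h2'⟩)
    · exact Or.inl (h1.trans h2)
    · exact Or.inl (h2 ▸ h1)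
    · exact Or.inl (h1 ▸ h2)
    · exact Or.inr ⟨h1.trans h2, h1'.trans h2'⟩
  set l : List (Fin (n+1)) := nearList x' i' with hl
  have hsort : l.Pairwise r :=
    @List.pairwise_insertionSort _ r (Classical.decRel _) _ _ _
  have hperm : l.Perm (List.finRange (n+1)) :=
    @List.perm_insertionSort _ _ (Classical.decRel _) _
  have hnd : l.Nodup := hperm.nodup_iff.mpr (List.nodup_finRange _)
  have hlen : l.length = n + 1 := by
    rw [hperm.length_eq, List.length_finRange]
  have hmem : ∀ j : Fin (n+1), j ∈ l := fun j =>
    hperm.mem_iff.mpr (List.mem_finRange j)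
  -- the cluster of i in the extended configuration
  set S : Finset (Fin (n+1)) := Finset.univ.filter fun j => x' j = x' i' with hS
  have hScard : k ≤ S.card := by
    refine le_trans (hx i) ?_
    refine Finset.card_le_card_of_injOn Fin.castSucc ?_ ?_
    · intro a ha
      simp only [Finset.mem_coe, Finset.mem_filter, Finset.mem_univ, true_and] at ha
      simp only [Finset.mem_coe, hS, Finset.mem_filter, Finset.mem_univ, true_and]
      show x' (Fin.castSucc a) = x' i'
      simpa [hx', hi', Fin.snoc_castSucc] using ha
    · intro a _ b _ h
      exact Fin.castSucc_injective _ h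
  -- every element of the first k entries of l lies in S
  have hkey : ∀ j ∈ nbr k x' i', x' j = x' i' := by
    intro j hj
    rw [nbr, List.mem_toFinset, ← hl] at hj
    rw [List.mem_take_iff_getElem] at hj
    obtain ⟨p, hp, hpj⟩ := hj
    have hpk : p < k := lt_of_lt_of_le hp inf_le_left
    have hpl : p < l.length := lt_of_lt_of_le hp inf_le_right
    by_contra hne
    have hpos : 0 < |x' j - x' i'| := abs_pos.mpr (sub_ne_zero.mpr hne)
    -- every element of S has index < p
    have hidx : ∀ s ∈ S, l.idxOf s < p := by
      intro s hs
      simp only [hS, Finset.mem_filter, Finset.mem_univ, true_and] at hs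
      have hsl : l.idxOf s < l.length := List.idxOf_lt_length_iff.mpr (hmem s)
      have hget : l.get ⟨l.idxOf s, hsl⟩ = s := List.idxOf_get hsl
      by_contra hle
      push_neg at hle
      rcases eq_or_lt_of_le hle with heq | hlt
      · apply hne
        rw [← hpj]
        have : l.get ⟨p, hpl⟩ = s := by rw [← hget]; exact congrArg l.get (Fin.ext heq)
        simp only [List.get_eq_getElem] at this
        rw [this, hs]
      · have := List.pairwise_iff_get.mp hsort ⟨p, hpl⟩ ⟨l.idxOf s, hsl⟩ hlt
        rw [hget] at this
        simp only [List.get_eq_getElem, hpj] at this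
        rcases this with h | ⟨h, -⟩
        · rw [hs, sub_self, abs_zero] at h
          exact absurd h (not_lt.mpr hpos.le)
        · rw [hs, sub_self, abs_zero] at h
          exact absurd h (ne_of_gt hpos)
    -- so S injects into range p, contradiction with k ≤ |S|
    have : S.card ≤ p := by
      have := Finset.card_le_card_of_injOn (fun s => l.idxOf s)
        (fun s hs => Finset.mem_range.mpr (hidx s hs)) ?_
      · simpa using this
      · intro a ha b hb hab
        have hal : l.idxOf a < l.length := List.idxOf_lt_length_iff.mpr (hmem a)
        have hbl : l.idxOf b < l.length := List.idxOf_lt_length_iff.mpr (hmem b)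
        have ha' := List.idxOf_get hal
        have hb' := List.idxOf_get hbl
        rw [← ha', ← hb']
        exact congrArg l.get (Fin.ext hab)
    omega
  -- cardinality of the neighborhood is k
  have hcard : (nbr k x' i').card = k := by
    rw [nbr, List.toFinset_card_of_nodup (hnd.sublist (List.take_sublist _ _))]
    show (List.take k l).length = k
    rw [List.length_take, hlen]
    omega
  -- conclude
  have hsum : (∑ j ∈ nbr k x' i', x' j) / k = x' i' := by
    rw [Finset.sum_congr rfl hkey, Finset.sum_const, hcard, nsmul_eq_mul]
    field_simp
  rw [upd, hsum, Function.update_eq_self]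
end
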